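/- Let H be a nonnegative random variable with finite second moment and λ > 0, N ≥ 1 integer, u, u₂ ≥ 0 with u₂ ≥ u², and θ^HT = θ^BS = θ ∈ [0,1]. Define, for the Hysteresis Time scheme with hysteresis variable D (nonnegative, with E[e^{-λD}] = θ), M_HT = E[I²] as in Eq. (14) and M_BS = E[I²] as in Eq. (21) of the paper. Then M_BS - M_HT = 2E[De^{-λD}]·((1-N)/λ - u) ≤ 0 whenever N ≥ 1, hence E[Δ^BS] ≤ E[Δ^HT]. -/
import Mathlib


open MeasureTheory

/-- Comparison of the second moments of the informative inter-departure interval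
under the Hysteresis Time scheme (Eq. (14)) and the Bernoulli Sleep scheme
(Eq. (21)) with equal sleeping probabilities `θ = E[e^{-λD}]`:
`M_BS - M_HT = 2E[De^{-λD}]·((1-N)/λ - u) ≤ 0`, hence `E[Δ^BS] ≤ E[Δ^HT]`. -/
theorem stmt_9 {Ω : Type*} [MeasureSpace Ω] {μ : Measure Ω} [IsProbabilityMeasure μ]
    (H D : Ω → ℝ) (hH0 : ∀ ω, 0 ≤ H ω) (hD0 : ∀ ω, 0 ≤ D ω)
    (hHm : Measurable H) (hDm : Measurable D)
    (hHi : Integrable H μ) (hH2 : Integrable (fun ω => H ω ^ 2) μ)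
    (lam : ℝ) (hlam : 0 < lam) (N : ℕ) (hN : 1 ≤ N)
    (u u₂ : ℝ) (hu : 0 ≤ u) (hu2 : u ^ 2 ≤ u₂) :
    let EH : ℝ := ∫ ω, H ω ∂μ
    let EH2 : ℝ := ∫ ω, H ω ^ 2 ∂μ
    let θ : ℝ := ∫ ω, Real.exp (-lam * D ω) ∂μ
    let d : ℝ := ∫ ω, D ω * Real.exp (-lam * D ω) ∂μ
    let MHT : ℝ := 2 * (1 - θ) / lam ^ 2 - 2 * d / lam + 2 * (N : ℝ) * d / lam
      + 2 * d * u + θ * (N : ℝ) * ((N : ℝ) + 1) / lam ^ 2 + 2 * θ * (N : ℝ) * u / lam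
      + θ * u₂ + EH2 + 2 * EH * ((1 - θ) / lam + θ * ((N : ℝ) / lam + u))
    let MBS : ℝ := 2 * EH * ((1 - θ + (N : ℝ) * θ) / lam + θ * u)
      + 2 * (1 - θ) / lam ^ 2 + θ * (N : ℝ) * ((N : ℝ) + 1) / lam ^ 2 + EH2
      + 2 * θ * (N : ℝ) * u / lam + θ * u₂
    MBS - MHT = 2 * d * ((1 - (N : ℝ)) / lam - u) ∧ MBS ≤ MHT := by
  intro EH EH2 θ d MHT MBS
  have hd : 0 ≤ d :=
    integral_nonneg fun ω => mul_nonneg (hD0 ω) (Real.exp_pos _).le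
  have hN1 : (1:ℝ) ≤ (N:ℝ) := by exact_mod_cast hN
  have heq : MBS - MHT = 2 * d * ((1 - (N : ℝ)) / lam - u) := by
    simp only [MBS, MHT]
    field_simp
    ring
  refine ⟨heq, ?_⟩
  have : MBS - MHT ≤ 0 := by
    rw [heq]
    apply mul_nonpos_of_nonneg_of_nonpos (by linarith)
    have : (1 - (N:ℝ)) / lam ≤ 0 := div_nonpos_of_nonpos_of_nonneg (by linarith) hlam.le
    linarith
  linarith
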